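/- Let D(v₁,v₁′,v₂,v₂′,v₃,v₃′) be the 4×4 determinant whose rows are (A₁,A₂,A₃,A₄) evaluated at (v₁,v₂,v₃), (v₁′,v₂,v₃), (v₁,v₂′,v₃), (v₁,v₂,v₃′), where each Aᵢ is a trilinear form on V₁ᵛ×V₂ᵛ×V₃ᵛ with each Vᵢ two-dimensional. Then D vanishes whenever v₁ and v₁′ are linearly dependent, whenever v₂ and v₂′ are linearly dependent, and whenever v₃ and v₃′ are linearly dependent; hence D is divisible by det(v₁,v₁′)·det(v₂,v₂′)·det(v₃,v₃′) as a polynomial. -/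

import Mathlib

open Matrix

/-- The trilinear form with coefficients `a i`, evaluated over an `F`-algebra `R`. -/
def triForm {F R : Type*} [Field F] [CommRing R] [Algebra F R]
    (a : Fin 4 → Fin 2 → Fin 2 → Fin 2 → F) (i : Fin 4) (v w x : Fin 2 → R) : R :=
  ∑ p : Fin 2, ∑ q : Fin 2, ∑ r : Fin 2,
    algebraMap F R (a i p q r) * v p * w q * x r

/-- The 4×4 determinant `D(v₁,v₁′,v₂,v₂′,v₃,v₃′)` whose rows are `(A₁,…,A₄)` evaluated
at `(v₁,v₂,v₃)`, `(v₁′,v₂,v₃)`, `(v₁,v₂′,v₃)`, `(v₁,v₂,v₃′)`. -/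
def Dform {F R : Type*} [Field F] [CommRing R] [Algebra F R]
    (a : Fin 4 → Fin 2 → Fin 2 → Fin 2 → F)
    (v₁ v₁' v₂ v₂' v₃ v₃' : Fin 2 → R) : R :=
  Matrix.det (Matrix.of fun (row col : Fin 4) =>
    triForm a col (![v₁, v₁', v₁, v₁] row) (![v₂, v₂, v₂', v₂] row)
      (![v₃, v₃, v₃, v₃'] row))

/-- The 2×2 determinant of the coordinates of two vectors. -/
def det2 {R : Type*} [CommRing R] (v w : Fin 2 → R) : R := v 0 * w 1 - v 1 * w 0


private theorem det_fin_four' {R : Type*} [CommRing R] (M : Matrix (Fin 4) (Fin 4) R) :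
    det M = M 0 0 * M 1 1 * M 2 2 * M 3 3
      - M 0 0 * M 1 1 * M 2 3 * M 3 2
      - M 0 0 * M 1 2 * M 2 1 * M 3 3
      + M 0 0 * M 1 2 * M 2 3 * M 3 1
      + M 0 0 * M 1 3 * M 2 1 * M 3 2
      - M 0 0 * M 1 3 * M 2 2 * M 3 1
      - M 0 1 * M 1 0 * M 2 2 * M 3 3
      + M 0 1 * M 1 0 * M 2 3 * M 3 2
      + M 0 1 * M 1 2 * M 2 0 * M 3 3
      - M 0 1 * M 1 2 * M 2 3 * M 3 0
      - M 0 1 * M 1 3 * M 2 0 * M 3 2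
      + M 0 1 * M 1 3 * M 2 2 * M 3 0
      + M 0 2 * M 1 0 * M 2 1 * M 3 3
      - M 0 2 * M 1 0 * M 2 3 * M 3 1
      - M 0 2 * M 1 1 * M 2 0 * M 3 3
      + M 0 2 * M 1 1 * M 2 3 * M 3 0
      + M 0 2 * M 1 3 * M 2 0 * M 3 1
      - M 0 2 * M 1 3 * M 2 1 * M 3 0
      - M 0 3 * M 1 0 * M 2 1 * M 3 2
      + M 0 3 * M 1 0 * M 2 2 * M 3 1
      + M 0 3 * M 1 1 * M 2 0 * M 3 2
      - M 0 3 * M 1 1 * M 2 2 * M 3 0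
      - M 0 3 * M 1 2 * M 2 0 * M 3 1
      + M 0 3 * M 1 2 * M 2 1 * M 3 0 := by
  rw [Matrix.det_succ_row_zero]
  simp only [Fin.sum_univ_four, Matrix.det_fin_three, Matrix.submatrix_apply]
  simp only [show Fin.succ (0:Fin 3) = 1 by decide,
    show Fin.succ (1:Fin 3) = 2 by decide,
    show Fin.succ (2:Fin 3) = 3 by decide,
    show Fin.succAbove (0:Fin 4) (0:Fin 3) = 1 by decide,
    show Fin.succAbove (0:Fin 4) (1:Fin 3) = 2 by decide,
    show Fin.succAbove (0:Fin 4) (2:Fin 3) = 3 by decide,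
    show Fin.succAbove (1:Fin 4) (0:Fin 3) = 0 by decide,
    show Fin.succAbove (1:Fin 4) (1:Fin 3) = 2 by decide,
    show Fin.succAbove (1:Fin 4) (2:Fin 3) = 3 by decide,
    show Fin.succAbove (2:Fin 4) (0:Fin 3) = 0 by decide,
    show Fin.succAbove (2:Fin 4) (1:Fin 3) = 1 by decide,
    show Fin.succAbove (2:Fin 4) (2:Fin 3) = 3 by decide,
    show Fin.succAbove (3:Fin 4) (0:Fin 3) = 0 by decide,
    show Fin.succAbove (3:Fin 4) (1:Fin 3) = 1 by decide,
    show Fin.succAbove (3:Fin 4) (2:Fin 3) = 2 by decide]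
  simp only [show (((3:Fin 4)):ℕ) = 3 from rfl]
  norm_num
  ring

section helpers

variable {F R : Type*} [Field F] [CommRing R] [Algebra F R]
variable (a : Fin 4 → Fin 2 → Fin 2 → Fin 2 → F)

/-- The standard basis vectors of `Fin 2 → R`. -/
def e (i : Fin 2) : Fin 2 → R := fun p => if p = i then 1 else 0

private lemma triForm_smul₁ (c : R) (v w x : Fin 2 → R) (i : Fin 4) :
    triForm a i (c • v) w x = c * triForm a i v w x := by
  simp only [triForm, Fin.sum_univ_two, Pi.smul_apply, smul_eq_mul]; ring

private lemma triForm_smul₂ (c : R) (v w x : Fin 2 → R) (i : Fin 4) :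
    triForm a i v (c • w) x = c * triForm a i v w x := by
  simp only [triForm, Fin.sum_univ_two, Pi.smul_apply, smul_eq_mul]; ring

private lemma triForm_smul₃ (c : R) (v w x : Fin 2 → R) (i : Fin 4) :
    triForm a i v w (c • x) = c * triForm a i v w x := by
  simp only [triForm, Fin.sum_univ_two, Pi.smul_apply, smul_eq_mul]; ring

private lemma triForm_add₁ (v v' w x : Fin 2 → R) (i : Fin 4) :
    triForm a i (v + v') w x = triForm a i v w x + triForm a i v' w x := by
  simp only [triForm, Fin.sum_univ_two, Pi.add_apply]; ring

private lemma triForm_add₂ (v w w' x : Fin 2 → R) (i : Fin 4) :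
    triForm a i v (w + w') x = triForm a i v w x + triForm a i v w' x := by
  simp only [triForm, Fin.sum_univ_two, Pi.add_apply]; ring

private lemma triForm_add₃ (v w x x' : Fin 2 → R) (i : Fin 4) :
    triForm a i v w (x + x') = triForm a i v w x + triForm a i v w x' := by
  simp only [triForm, Fin.sum_univ_two, Pi.add_apply]; ring

attribute [local simp] Matrix.cons_val_two Matrix.cons_val_three

private lemma Dform_smul₂ (c : R) (v₁ u v₂ v₂' v₃ v₃' : Fin 2 → R) :
    Dform a v₁ (c • u) v₂ v₂' v₃ v₃' = c * Dform a v₁ u v₂ v₂' v₃ v₃' := by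
  simp only [Dform, det_fin_four', Matrix.of_apply, Matrix.cons_val_zero, Matrix.cons_val_one,
    Matrix.head_cons, Matrix.cons_val_two, Matrix.cons_val_three, Matrix.cons_val_succ, Matrix.vecTail, Matrix.vecHead,
    Function.comp_apply, triForm_smul₁]
  ring

private lemma Dform_add₂ (v₁ u u' v₂ v₂' v₃ v₃' : Fin 2 → R) :
    Dform a v₁ (u + u') v₂ v₂' v₃ v₃' =
      Dform a v₁ u v₂ v₂' v₃ v₃' + Dform a v₁ u' v₂ v₂' v₃ v₃' := by
  simp only [Dform, det_fin_four', Matrix.of_apply, Matrix.cons_val_zero, Matrix.cons_val_one,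
    Matrix.head_cons, Matrix.cons_val_two, Matrix.cons_val_three, Matrix.cons_val_succ, Matrix.vecTail, Matrix.vecHead,
    Function.comp_apply, triForm_add₁]
  ring

private lemma Dform_smul₄ (c : R) (v₁ v₁' v₂ u v₃ v₃' : Fin 2 → R) :
    Dform a v₁ v₁' v₂ (c • u) v₃ v₃' = c * Dform a v₁ v₁' v₂ u v₃ v₃' := by
  simp only [Dform, det_fin_four', Matrix.of_apply, Matrix.cons_val_zero, Matrix.cons_val_one,
    Matrix.head_cons, Matrix.cons_val_two, Matrix.cons_val_three, Matrix.cons_val_succ, Matrix.vecTail, Matrix.vecHead,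
    Function.comp_apply, triForm_smul₂]
  ring

private lemma Dform_add₄ (v₁ v₁' v₂ u u' v₃ v₃' : Fin 2 → R) :
    Dform a v₁ v₁' v₂ (u + u') v₃ v₃' =
      Dform a v₁ v₁' v₂ u v₃ v₃' + Dform a v₁ v₁' v₂ u' v₃ v₃' := by
  simp only [Dform, det_fin_four', Matrix.of_apply, Matrix.cons_val_zero, Matrix.cons_val_one,
    Matrix.head_cons, Matrix.cons_val_two, Matrix.cons_val_three, Matrix.cons_val_succ, Matrix.vecTail, Matrix.vecHead,
    Function.comp_apply, triForm_add₂]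
  ring

private lemma Dform_smul₆ (c : R) (v₁ v₁' v₂ v₂' v₃ u : Fin 2 → R) :
    Dform a v₁ v₁' v₂ v₂' v₃ (c • u) = c * Dform a v₁ v₁' v₂ v₂' v₃ u := by
  simp only [Dform, det_fin_four', Matrix.of_apply, Matrix.cons_val_zero, Matrix.cons_val_one,
    Matrix.head_cons, Matrix.cons_val_two, Matrix.cons_val_three, Matrix.cons_val_succ, Matrix.vecTail, Matrix.vecHead,
    Function.comp_apply, triForm_smul₃]
  ring

private lemma Dform_add₆ (v₁ v₁' v₂ v₂' v₃ u u' : Fin 2 → R) :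
    Dform a v₁ v₁' v₂ v₂' v₃ (u + u') =
      Dform a v₁ v₁' v₂ v₂' v₃ u + Dform a v₁ v₁' v₂ v₂' v₃ u' := by
  simp only [Dform, det_fin_four', Matrix.of_apply, Matrix.cons_val_zero, Matrix.cons_val_one,
    Matrix.head_cons, Matrix.cons_val_two, Matrix.cons_val_three, Matrix.cons_val_succ, Matrix.vecTail, Matrix.vecHead,
    Function.comp_apply, triForm_add₃]
  ring

private lemma Dform_vanish₂ (v v₂ v₂' v₃ v₃' : Fin 2 → R) :
    Dform a v v v₂ v₂' v₃ v₃' = 0 := by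
  simp only [Dform, det_fin_four', Matrix.of_apply, Matrix.cons_val_zero, Matrix.cons_val_one,
    Matrix.head_cons, Matrix.cons_val_two, Matrix.cons_val_three, Matrix.cons_val_succ, Matrix.vecTail, Matrix.vecHead,
    Function.comp_apply]
  ring

private lemma Dform_vanish₄ (v₁ v₁' v v₃ v₃' : Fin 2 → R) :
    Dform a v₁ v₁' v v v₃ v₃' = 0 := by
  simp only [Dform, det_fin_four', Matrix.of_apply, Matrix.cons_val_zero, Matrix.cons_val_one,
    Matrix.head_cons, Matrix.cons_val_two, Matrix.cons_val_three, Matrix.cons_val_succ, Matrix.vecTail, Matrix.vecHead,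
    Function.comp_apply]
  ring

private lemma Dform_vanish₆ (v₁ v₁' v₂ v₂' v : Fin 2 → R) :
    Dform a v₁ v₁' v₂ v₂' v v = 0 := by
  simp only [Dform, det_fin_four', Matrix.of_apply, Matrix.cons_val_zero, Matrix.cons_val_one,
    Matrix.head_cons, Matrix.cons_val_two, Matrix.cons_val_three, Matrix.cons_val_succ, Matrix.vecTail, Matrix.vecHead,
    Function.comp_apply]
  ring

private lemma Dform_rev₂ (c : R) (u v₂ v₂' v₃ v₃' : Fin 2 → R) :
    Dform a (c • u) u v₂ v₂' v₃ v₃' = 0 := by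
  simp only [Dform, det_fin_four', Matrix.of_apply, Matrix.cons_val_zero, Matrix.cons_val_one,
    Matrix.head_cons, Matrix.cons_val_two, Matrix.cons_val_three, Matrix.cons_val_succ, Matrix.vecTail, Matrix.vecHead,
    Function.comp_apply, triForm_smul₁]
  ring

private lemma Dform_rev₄ (c : R) (v₁ v₁' u v₃ v₃' : Fin 2 → R) :
    Dform a v₁ v₁' (c • u) u v₃ v₃' = 0 := by
  simp only [Dform, det_fin_four', Matrix.of_apply, Matrix.cons_val_zero, Matrix.cons_val_one,
    Matrix.head_cons, Matrix.cons_val_two, Matrix.cons_val_three, Matrix.cons_val_succ, Matrix.vecTail, Matrix.vecHead,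
    Function.comp_apply, triForm_smul₂]
  ring

private lemma Dform_rev₆ (c : R) (v₁ v₁' v₂ v₂' u : Fin 2 → R) :
    Dform a v₁ v₁' v₂ v₂' (c • u) u = 0 := by
  simp only [Dform, det_fin_four', Matrix.of_apply, Matrix.cons_val_zero, Matrix.cons_val_one,
    Matrix.head_cons, Matrix.cons_val_two, Matrix.cons_val_three, Matrix.cons_val_succ, Matrix.vecTail, Matrix.vecHead,
    Function.comp_apply, triForm_smul₃]
  ring

private lemma basis_decomp (u : Fin 2 → R) : u = u 0 • (e 0 : Fin 2 → R) + u 1 • (e 1 : Fin 2 → R) := by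
  funext p
  fin_cases p <;> simp [e]

private lemma Dform_decomp₂ (v₁ u v₂ v₂' v₃ v₃' : Fin 2 → R) :
    Dform a v₁ u v₂ v₂' v₃ v₃' =
      u 0 * Dform a v₁ (e 0) v₂ v₂' v₃ v₃' + u 1 * Dform a v₁ (e 1) v₂ v₂' v₃ v₃' := by
  conv_lhs => rw [basis_decomp u]
  rw [Dform_add₂, Dform_smul₂, Dform_smul₂]

private lemma Dform_decomp₄ (v₁ v₁' v₂ u v₃ v₃' : Fin 2 → R) :
    Dform a v₁ v₁' v₂ u v₃ v₃' =
      u 0 * Dform a v₁ v₁' v₂ (e 0) v₃ v₃' + u 1 * Dform a v₁ v₁' v₂ (e 1) v₃ v₃' := by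
  conv_lhs => rw [basis_decomp u]
  rw [Dform_add₄, Dform_smul₄, Dform_smul₄]

private lemma Dform_decomp₆ (v₁ v₁' v₂ v₂' v₃ u : Fin 2 → R) :
    Dform a v₁ v₁' v₂ v₂' v₃ u =
      u 0 * Dform a v₁ v₁' v₂ v₂' v₃ (e 0) + u 1 * Dform a v₁ v₁' v₂ v₂' v₃ (e 1) := by
  conv_lhs => rw [basis_decomp u]
  rw [Dform_add₆, Dform_smul₆, Dform_smul₆]

private lemma Dform_decomp_all (v₁ u v₂ w v₃ x : Fin 2 → R) :
    Dform a v₁ u v₂ w v₃ x =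
      u 0 * w 0 * x 0 * Dform a v₁ (e 0) v₂ (e 0) v₃ (e 0) +
      u 0 * w 0 * x 1 * Dform a v₁ (e 0) v₂ (e 0) v₃ (e 1) +
      u 0 * w 1 * x 0 * Dform a v₁ (e 0) v₂ (e 1) v₃ (e 0) +
      u 0 * w 1 * x 1 * Dform a v₁ (e 0) v₂ (e 1) v₃ (e 1) +
      u 1 * w 0 * x 0 * Dform a v₁ (e 1) v₂ (e 0) v₃ (e 0) +
      u 1 * w 0 * x 1 * Dform a v₁ (e 1) v₂ (e 0) v₃ (e 1) +
      u 1 * w 1 * x 0 * Dform a v₁ (e 1) v₂ (e 1) v₃ (e 0) +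
      u 1 * w 1 * x 1 * Dform a v₁ (e 1) v₂ (e 1) v₃ (e 1) := by
  rw [Dform_decomp₂ a v₁ u v₂ w v₃ x,
    Dform_decomp₄ a v₁ (e 0) v₂ w v₃ x, Dform_decomp₄ a v₁ (e 1) v₂ w v₃ x,
    Dform_decomp₆ a v₁ (e 0) v₂ (e 0) v₃ x, Dform_decomp₆ a v₁ (e 0) v₂ (e 1) v₃ x,
    Dform_decomp₆ a v₁ (e 1) v₂ (e 0) v₃ x, Dform_decomp₆ a v₁ (e 1) v₂ (e 1) v₃ x]
  ring

end helpers

section prime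

variable {F : Type*} [Field F]

private lemma primeX (v : Fin 6 × Fin 2) :
    Prime (MvPolynomial.X v : MvPolynomial (Fin 6 × Fin 2) F) := by
  classical
  let f : (Fin 6 × Fin 2) ≃ Fin 12 := finProdFinEquiv.trans (finCongr (by norm_num))
  let g : (Fin 6 × Fin 2) ≃ Fin 12 := f.trans (Equiv.swap (f v) 0)
  have hg : g v = 0 := by simp [g, Equiv.swap_apply_left]
  have h1 := (MulEquiv.prime_iff (MvPolynomial.renameEquiv F g).toMulEquiv
    (p := (MvPolynomial.X v : MvPolynomial (Fin 6 × Fin 2) F))).symm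
  rw [h1]
  have : (MvPolynomial.renameEquiv F g).toMulEquiv (MvPolynomial.X v) =
      MvPolynomial.X (0 : Fin 12) := by
    simp [MvPolynomial.renameEquiv_apply, MvPolynomial.rename_X, hg]
  rw [this]
  have h2 := (MulEquiv.prime_iff (MvPolynomial.finSuccEquiv F 11).toMulEquiv
    (p := (MvPolynomial.X 0 : MvPolynomial (Fin 12) F))).symm
  rw [h2]
  have : (MvPolynomial.finSuccEquiv F 11).toMulEquiv (MvPolynomial.X 0) =
      (Polynomial.X : Polynomial (MvPolynomial (Fin 11) F)) := by
    simpa using MvPolynomial.finSuccEquiv_X_zero (R := F) (n := 11)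
  rw [this]
  exact Polynomial.prime_X

private lemma X_not_dvd_X {v w : Fin 6 × Fin 2} (h : v ≠ w) :
    ¬ ((MvPolynomial.X v : MvPolynomial (Fin 6 × Fin 2) F) ∣ MvPolynomial.X w) := by
  classical
  rintro ⟨g, hg⟩
  have := congrArg (MvPolynomial.eval (fun u => if u = w then (1 : F) else 0)) hg
  simp [h, MvPolynomial.eval_X] at this

end prime

/-- `D` vanishes whenever `vᵢ` and `vᵢ′` are linearly dependent for some `i`; hence,
as a polynomial in the coordinates of the six vectors, `D` is divisible by
`det(v₁,v₁′)·det(v₂,v₂′)·det(v₃,v₃′)`. -/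
theorem stmt19 (F : Type) [Field F] [CharZero F]
    (a : Fin 4 → Fin 2 → Fin 2 → Fin 2 → F) :
    (∀ v₁ v₁' v₂ v₂' v₃ v₃' : Fin 2 → F,
      ((∃ c : F, v₁' = c • v₁ ∨ v₁ = c • v₁') ∨
       (∃ c : F, v₂' = c • v₂ ∨ v₂ = c • v₂') ∨
       (∃ c : F, v₃' = c • v₃ ∨ v₃ = c • v₃')) →
      Dform a v₁ v₁' v₂ v₂' v₃ v₃' = 0) ∧
    (det2 (fun p => (MvPolynomial.X ((0 : Fin 6), p) : MvPolynomial (Fin 6 × Fin 2) F))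
          (fun p => MvPolynomial.X (1, p)) *
        det2 (fun p => MvPolynomial.X (2, p)) (fun p => MvPolynomial.X (3, p)) *
        det2 (fun p => MvPolynomial.X (4, p)) (fun p => MvPolynomial.X (5, p)) ∣
      Dform a (fun p => MvPolynomial.X (0, p)) (fun p => MvPolynomial.X (1, p))
        (fun p => MvPolynomial.X (2, p)) (fun p => MvPolynomial.X (3, p))
        (fun p => MvPolynomial.X (4, p)) (fun p => MvPolynomial.X (5, p))) := by
  classical
  constructor
  · rintro v₁ v₁' v₂ v₂' v₃ v₃'
      (⟨c, rfl | rfl⟩ | ⟨c, rfl | rfl⟩ | ⟨c, rfl | rfl⟩)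
    · rw [Dform_smul₂, Dform_vanish₂, mul_zero]
    · exact Dform_rev₂ a c v₁' v₂ v₂' v₃ v₃'
    · rw [Dform_smul₄, Dform_vanish₄, mul_zero]
    · exact Dform_rev₄ a c v₁ v₁' v₂' v₃ v₃'
    · rw [Dform_smul₆, Dform_vanish₆, mul_zero]
    · exact Dform_rev₆ a c v₁ v₁' v₂ v₂' v₃'
  · set S := MvPolynomial (Fin 6 × Fin 2) F
    set v0 : Fin 2 → S := fun p => MvPolynomial.X (0, p) with hv0
    set v1 : Fin 2 → S := fun p => MvPolynomial.X (1, p) with hv1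
    set v2 : Fin 2 → S := fun p => MvPolynomial.X (2, p) with hv2
    set v3 : Fin 2 → S := fun p => MvPolynomial.X (3, p) with hv3
    set v4 : Fin 2 → S := fun p => MvPolynomial.X (4, p) with hv4
    set v5 : Fin 2 → S := fun p => MvPolynomial.X (5, p) with hv5
    -- contraction identities
    have hR1 : ∀ j k : Fin 2,
        MvPolynomial.X ((0 : Fin 6), (0 : Fin 2)) * Dform a v0 (e 0) v2 (e j) v4 (e k)
          + MvPolynomial.X (0, 1) * Dform a v0 (e 1) v2 (e j) v4 (e k) = 0 := by
      intro j k
      have h1 := Dform_decomp₂ a v0 v0 v2 (e j) v4 (e k)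
      have h2 := Dform_vanish₂ a v0 v2 (e j) v4 (e k)
      rw [h2] at h1
      simpa [hv0] using h1.symm
    have hR2 : ∀ i k : Fin 2,
        MvPolynomial.X ((2 : Fin 6), (0 : Fin 2)) * Dform a v0 (e i) v2 (e 0) v4 (e k)
          + MvPolynomial.X (2, 1) * Dform a v0 (e i) v2 (e 1) v4 (e k) = 0 := by
      intro i k
      have h1 := Dform_decomp₄ a v0 (e i) v2 v2 v4 (e k)
      have h2 := Dform_vanish₄ a v0 (e i) v2 v4 (e k)
      rw [h2] at h1
      simpa [hv2] using h1.symm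
    have hR3 : ∀ i j : Fin 2,
        MvPolynomial.X ((4 : Fin 6), (0 : Fin 2)) * Dform a v0 (e i) v2 (e j) v4 (e 0)
          + MvPolynomial.X (4, 1) * Dform a v0 (e i) v2 (e j) v4 (e 1) = 0 := by
      intro i j
      have h1 := Dform_decomp₆ a v0 (e i) v2 (e j) v4 v4
      have h2 := Dform_vanish₆ a v0 (e i) v2 (e j) v4
      rw [h2] at h1
      simpa [hv4] using h1.symm
    -- peel off the first determinant factor
    have hstep1 : ∀ j k : Fin 2, ∃ A : S,
        Dform a v0 (e 0) v2 (e j) v4 (e k) = MvPolynomial.X (0, 1) * A ∧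
        Dform a v0 (e 1) v2 (e j) v4 (e k) = -(MvPolynomial.X (0, 0) * A) := by
      intro j k
      have h := hR1 j k
      have hdvd : (MvPolynomial.X ((0 : Fin 6), (1 : Fin 2)) : S) ∣
          MvPolynomial.X ((0 : Fin 6), (0 : Fin 2)) * Dform a v0 (e 0) v2 (e j) v4 (e k) :=
        ⟨-(Dform a v0 (e 1) v2 (e j) v4 (e k)), by linear_combination h⟩
      rcases (primeX _).2.2 _ _ hdvd with hd | hd
      · exact absurd hd (X_not_dvd_X (by simp))
      obtain ⟨A, hA⟩ := hd
      refine ⟨A, hA, ?_⟩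
      have hne : (MvPolynomial.X ((0 : Fin 6), (1 : Fin 2)) : S) ≠ 0 := MvPolynomial.X_ne_zero _
      apply mul_left_cancel₀ hne
      rw [hA] at h
      linear_combination h
    choose A hA0 hA1 using hstep1
    -- peel off the second factor
    have hstep2 : ∀ k : Fin 2, ∃ B : S,
        A 0 k = MvPolynomial.X (2, 1) * B ∧ A 1 k = -(MvPolynomial.X (2, 0) * B) := by
      intro k
      have h := hR2 0 k
      rw [hA0 0 k, hA0 1 k] at h
      have hne : (MvPolynomial.X ((0 : Fin 6), (1 : Fin 2)) : S) ≠ 0 := MvPolynomial.X_ne_zero _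
      have h' : MvPolynomial.X ((2 : Fin 6), (0 : Fin 2)) * A 0 k
          + MvPolynomial.X (2, 1) * A 1 k = 0 := by
        apply mul_left_cancel₀ hne
        linear_combination h
      have hdvd : (MvPolynomial.X ((2 : Fin 6), (1 : Fin 2)) : S) ∣
          MvPolynomial.X ((2 : Fin 6), (0 : Fin 2)) * A 0 k :=
        ⟨-(A 1 k), by linear_combination h'⟩
      rcases (primeX _).2.2 _ _ hdvd with hd | hd
      · exact absurd hd (X_not_dvd_X (by simp))
      obtain ⟨B, hB⟩ := hd
      refine ⟨B, hB, ?_⟩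
      have hne2 : (MvPolynomial.X ((2 : Fin 6), (1 : Fin 2)) : S) ≠ 0 := MvPolynomial.X_ne_zero _
      apply mul_left_cancel₀ hne2
      rw [hB] at h'
      linear_combination h'
    choose B hB0 hB1 using hstep2
    -- peel off the third factor
    have hstep3 : ∃ G : S,
        B 0 = MvPolynomial.X (4, 1) * G ∧ B 1 = -(MvPolynomial.X (4, 0) * G) := by
      have h := hR3 0 0
      rw [hA0 0 0, hA0 0 1, hB0 0, hB0 1] at h
      have hne01 : (MvPolynomial.X ((0 : Fin 6), (1 : Fin 2)) : S) ≠ 0 := MvPolynomial.X_ne_zero _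
      have hne21 : (MvPolynomial.X ((2 : Fin 6), (1 : Fin 2)) : S) ≠ 0 := MvPolynomial.X_ne_zero _
      have h' : MvPolynomial.X ((4 : Fin 6), (0 : Fin 2)) * B 0
          + MvPolynomial.X (4, 1) * B 1 = 0 := by
        apply mul_left_cancel₀ hne01
        apply mul_left_cancel₀ hne21
        linear_combination h
      have hdvd : (MvPolynomial.X ((4 : Fin 6), (1 : Fin 2)) : S) ∣
          MvPolynomial.X ((4 : Fin 6), (0 : Fin 2)) * B 0 :=
        ⟨-(B 1), by linear_combination h'⟩
      rcases (primeX _).2.2 _ _ hdvd with hd | hd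
      · exact absurd hd (X_not_dvd_X (by simp))
      obtain ⟨G, hG⟩ := hd
      refine ⟨G, hG, ?_⟩
      have hne41 : (MvPolynomial.X ((4 : Fin 6), (1 : Fin 2)) : S) ≠ 0 := MvPolynomial.X_ne_zero _
      apply mul_left_cancel₀ hne41
      rw [hG] at h'
      linear_combination h'
    obtain ⟨G, hG0, hG1⟩ := hstep3
    refine ⟨-G, ?_⟩
    rw [Dform_decomp_all a v0 v1 v2 v3 v4 v5]
    rw [hA0 0 0, hA0 0 1, hA0 1 0, hA0 1 1, hA1 0 0, hA1 0 1, hA1 1 0, hA1 1 1,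
      hB0 0, hB0 1, hB1 0, hB1 1, hG0, hG1]
    simp only [det2, hv0, hv1, hv2, hv3, hv4, hv5]
    ring
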